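/- Let M : α ↦ M_α be a matroid flock on E, and let α, β ∈ ℤ^E. If M_α = M_β, then there is a walk γ^0, …, γ^k ∈ ℤ^E with γ^0 = α and γ^k = β such that M_{γ^t} = M_α for all t = 0, …, k, and for each t ∈ {1,…,k} there is a subset J_t ⊆ E with γ^t − γ^{t−1} = e_{J_t} or γ^t − γ^{t−1} = −e_{J_t}. -/

import Mathlib

open Matroid Set

namespace FrobFlock

variable {E : Type*}

/-- The local rank function of a matroid: the size of a largest independent subset of `X`. -/
noncomputable def rk (M : Matroid E) (X : Set E) : ℕ :=
  sSup {n | ∃ I, I ⊆ X ∧ M.Indep I ∧ I.ncard = n}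

/-- Deletion of the set `D` from the matroid `M`. -/
def mdel (M : Matroid E) (D : Set E) : Matroid E := M ↾ (M.E \ D)

/-- Contraction of the set `C` in the matroid `M` (defined by duality). -/
def mcon (M : Matroid E) (C : Set E) : Matroid E := (mdel M✶ C)✶

/-- The 0/1 indicator vector of a set `I ⊆ E`. -/
noncomputable def eVec (I : Set E) : E → ℤ := I.indicator 1

/-- `M : ℤ^E → Matroid E` is a matroid flock of rank `d` on `E`:
each `M α` is a matroid on ground set `E` of rank `d`, satisfying (MF1) and (MF2). -/
def IsMatroidFlock [Fintype E] (d : ℕ) (M : (E → ℤ) → Matroid E) : Prop :=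
  (∀ α, (M α).E = Set.univ) ∧
  (∀ α, rk (M α) Set.univ = d) ∧
  (∀ α (i : E), mcon (M α) {i} = mdel (M (α + eVec {i})) {i}) ∧
  (∀ α, M α = M (α + 1))

/-- A matroid valuation `ν : binom(E,d) → ℤ ∪ {∞}`, encoded as a function on all finsets
which takes the value `⊤` outside `binom(E,d)`. -/
def IsValuation [DecidableEq E] (d : ℕ) (ν : Finset E → WithTop ℤ) : Prop :=
  (∀ B : Finset E, B.card ≠ d → ν B = ⊤) ∧
  (∃ B : Finset E, B.card = d ∧ ν B ≠ ⊤) ∧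
  (∀ B B' : Finset E, B.card = d → B'.card = d → ∀ i ∈ B \ B', ∃ j ∈ B' \ B,
      ν (insert j (B.erase i)) + ν (insert i (B'.erase j)) ≤ ν B + ν B')

/-- `B ∈ B^ν_α`: the set `B` attains the supremum `g^ν(α)`, i.e. `B` is a basis of `M^ν_α`. -/
def OptBasis (d : ℕ) (ν : Finset E → WithTop ℤ) (α : E → ℤ) (B : Finset E) : Prop :=
  B.card = d ∧ ν B ≠ ⊤ ∧ ∀ B' : Finset E, B'.card = d →
    ((∑ i ∈ B', α i : ℤ) : WithTop ℤ) + ν B ≤ ((∑ i ∈ B, α i : ℤ) : WithTop ℤ) + ν B'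


section RankTheory
variable [Fintype E] {M : Matroid E} {X Y I J : Set E}

lemma rk_le_of_forall {v : ℕ} (h : ∀ I, I ⊆ X → M.Indep I → I.ncard ≤ v) : rk M X ≤ v := by
  have hne : {n | ∃ I, I ⊆ X ∧ M.Indep I ∧ I.ncard = n}.Nonempty :=
    ⟨0, ∅, empty_subset X, M.empty_indep, by simp⟩
  apply csSup_le hne
  rintro n ⟨I, hIX, hI, rfl⟩; exact h I hIX hI

lemma ncard_le_rk (hIX : I ⊆ X) (hI : M.Indep I) : I.ncard ≤ rk M X := by
  refine le_csSup ⟨Nat.card E, ?_⟩ ⟨I, hIX, hI, rfl⟩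
  rintro n ⟨I, hIX, hI, rfl⟩
  simpa [Set.ncard_univ] using Set.ncard_le_ncard (subset_univ I) (toFinite _)

lemma rk_eq_of_basis' (hI : M.IsBasis' I X) : rk M X = I.ncard := by
  refine le_antisymm (rk_le_of_forall fun J hJX hJ => ?_) (ncard_le_rk hI.subset hI.indep)
  obtain ⟨J', hJ', hJJ'⟩ := hJ.subset_isBasis'_of_subset hJX
  have h := hJ'.encard_eq_encard hI
  calc J.ncard ≤ J'.ncard := Set.ncard_le_ncard hJJ' (toFinite _)
    _ = I.ncard := by rw [Set.ncard_def, h, ← Set.ncard_def]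

lemma rk_mono (hXY : X ⊆ Y) : rk M X ≤ rk M Y := by
  obtain ⟨I, hI⟩ := M.exists_isBasis' X
  rw [rk_eq_of_basis' hI]
  exact ncard_le_rk (hI.subset.trans hXY) hI.indep

@[simp] lemma rk_empty (M : Matroid E) : rk M ∅ = 0 :=
  le_antisymm (rk_le_of_forall fun I hI _ => by simp [subset_empty_iff.mp hI]) (Nat.zero_le _)

lemma indep_rk_eq (hI : M.Indep I) : rk M I = I.ncard :=
  rk_eq_of_basis' hI.isBasis_self.isBasis'

lemma rk_le_ncard (X : Set E) : rk M X ≤ X.ncard :=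
  rk_le_of_forall fun I hIX _ => Set.ncard_le_ncard hIX (toFinite _)

lemma rk_submod (M : Matroid E) (X Y : Set E) :
    rk M (X ∪ Y) + rk M (X ∩ Y) ≤ rk M X + rk M Y := by
  obtain ⟨I, hI⟩ := M.exists_isBasis' (X ∩ Y)
  obtain ⟨J, hJ, hIJ⟩ := hI.indep.subset_isBasis'_of_subset
    (hI.subset.trans (inter_subset_left.trans subset_union_left))
  have hJXY : J ⊆ X ∪ Y := hJ.subset
  have hIeq : (J ∩ X) ∩ (J ∩ Y) = I := by
    apply subset_antisymm
    · rintro x ⟨⟨hxJ, hxX⟩, -, hxY⟩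
      exact hI.mem_of_insert_indep ⟨hxX, hxY⟩ (hJ.indep.subset (insert_subset hxJ hIJ))
    · exact subset_inter (subset_inter hIJ (hI.subset.trans inter_subset_left))
        (subset_inter hIJ (hI.subset.trans inter_subset_right))
  have hu : (J ∩ X) ∪ (J ∩ Y) = J := by
    rw [← inter_union_distrib_left]; exact inter_eq_left.mpr hJXY
  have hcard := Set.ncard_union_add_ncard_inter (J ∩ X) (J ∩ Y) (toFinite _) (toFinite _)
  rw [hu, hIeq] at hcard
  have h1 : (J ∩ X).ncard ≤ rk M X := ncard_le_rk inter_subset_right (hJ.indep.subset inter_subset_left)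
  have h2 : (J ∩ Y).ncard ≤ rk M Y := ncard_le_rk inter_subset_right (hJ.indep.subset inter_subset_left)
  rw [rk_eq_of_basis' hJ, rk_eq_of_basis' hI]
  omega

lemma rk_union_le (M : Matroid E) (X Y : Set E) : rk M (X ∪ Y) ≤ rk M X + rk M Y :=
  le_trans (Nat.le_add_right _ _) (rk_submod M X Y)

lemma rk_restrict {R : Set E} (hXR : X ⊆ R) : rk (M ↾ R) X = rk M X := by
  unfold rk
  congr 1
  ext n
  constructor
  · rintro ⟨I, hIX, hI, rfl⟩; exact ⟨I, hIX, (restrict_indep_iff.mp hI).1, rfl⟩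
  · rintro ⟨I, hIX, hI, rfl⟩; exact ⟨I, hIX, restrict_indep_iff.mpr ⟨hI, hIX.trans hXR⟩, rfl⟩

lemma rk_ground_eq_ncard_base {B : Set E} (hB : M.IsBase B) : rk M M.E = B.ncard :=
  rk_eq_of_basis' hB.isBasis_ground.isBasis'

/-- Dual rank formula. -/
lemma rk_dual (hX : X ⊆ M.E) :
    rk M✶ X + rk M M.E = X.ncard + rk M (M.E \ X) := by
  obtain ⟨I, hI⟩ := M.exists_isBasis (M.E \ X) diff_subset
  obtain ⟨B, hB, hIB⟩ := hI.indep.exists_isBase_superset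
  have hBI : B ∩ (M.E \ X) = I :=
    (hI.eq_of_subset_indep (hB.indep.subset inter_subset_left)
      (subset_inter hIB hI.subset) inter_subset_right).symm
  -- upper bound for arbitrary dual-independent subsets of X
  have hub : ∀ J, J ⊆ X → M✶.Indep J → J.ncard + rk M M.E ≤ X.ncard + rk M (M.E \ X) := by
    intro J hJX hJ
    obtain ⟨B', hB', hJB'⟩ := (dual_indep_iff_exists (hJX.trans hX)).mp hJ
    have n1 : J.ncard ≤ (X \ B').ncard :=
      Set.ncard_le_ncard (fun x hx => ⟨hJX hx, fun hxB => hJB'.ne_of_mem hx hxB rfl⟩) (toFinite _)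
    have n2 : (X ∩ B').ncard + (X \ B').ncard = X.ncard :=
      Set.ncard_inter_add_ncard_diff_eq_ncard X B' (toFinite _)
    have n3 : (B' ∩ X).ncard + (B' \ X).ncard = B'.ncard :=
      Set.ncard_inter_add_ncard_diff_eq_ncard B' X (toFinite _)
    have n4 : (B' \ X).ncard ≤ rk M (M.E \ X) :=
      ncard_le_rk (diff_subset_diff_left hB'.subset_ground) (hB'.indep.subset diff_subset)
    have n5 : rk M M.E = B'.ncard := rk_ground_eq_ncard_base hB'
    have n6 : (X ∩ B').ncard = (B' ∩ X).ncard := by rw [inter_comm]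
    omega
  have hwit : M✶.Indep (X \ B) := by
    rw [dual_indep_iff_exists (diff_subset.trans hX)]
    exact ⟨B, hB, disjoint_sdiff_left⟩
  have hval : (X \ B).ncard + rk M M.E = X.ncard + rk M (M.E \ X) := by
    have n2 : (X ∩ B).ncard + (X \ B).ncard = X.ncard :=
      Set.ncard_inter_add_ncard_diff_eq_ncard X B (toFinite _)
    have n3 : (B ∩ X).ncard + (B \ X).ncard = B.ncard :=
      Set.ncard_inter_add_ncard_diff_eq_ncard B X (toFinite _)
    have n4 : (B \ X).ncard = I.ncard := by
      rw [← hBI]; congr 1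
      ext x; exact ⟨fun ⟨h1, h2⟩ => ⟨h1, hB.subset_ground h1, h2⟩, fun ⟨h1, _, h3⟩ => ⟨h1, h3⟩⟩
    have n5 : rk M M.E = B.ncard := rk_ground_eq_ncard_base hB
    have n6 : rk M (M.E \ X) = I.ncard := rk_eq_of_basis' hI.isBasis'
    have n7 : (X ∩ B).ncard = (B ∩ X).ncard := by rw [inter_comm]
    omega
  have : rk M✶ X = (X \ B).ncard := by
    refine le_antisymm (rk_le_of_forall fun J hJX hJ => ?_) (ncard_le_rk diff_subset hwit)
    have := hub J hJX hJ
    omega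
  omega

end RankTheory

section Chunk2
variable [Fintype E] {M : Matroid E} {X Y I J C D : Set E}

lemma rk_mdel (hX : X ⊆ M.E \ D) : rk (mdel M D) X = rk M X := rk_restrict hX

lemma rk_mcon (hC : C ⊆ M.E) (hX : X ⊆ M.E \ C) :
    rk (mcon M C) X + rk M C = rk M (X ∪ C) := by
  set G := M.E \ C with hG
  set N := mdel M✶ C with hN
  have hNE : N.E = G := by simp [hN, mdel, hG]
  have hXG : X ⊆ G := hX
  have e1 : rk N✶ X + rk N N.E = X.ncard + rk N (N.E \ X) := rk_dual (by simpa [hNE] using hXG)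
  have e2a : rk N G = rk M✶ G := rk_mdel (by rw [dual_ground])
  have e2b : rk N (G \ X) = rk M✶ (G \ X) := rk_mdel (by rw [dual_ground]; exact diff_subset)
  have e3 : rk M✶ G + rk M M.E = G.ncard + rk M C := by
    have := rk_dual (M := M) (X := G) diff_subset
    rwa [Set.diff_diff_cancel_left hC] at this
  have e4 : rk M✶ (G \ X) + rk M M.E = (G \ X).ncard + rk M (X ∪ C) := by
    have := rk_dual (M := M) (X := G \ X) (diff_subset.trans diff_subset)
    have hset : M.E \ (G \ X) = X ∪ C := by
      apply subset_antisymm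
      · rintro x ⟨hxE, hx⟩
        simp only [hG, mem_diff, not_and, not_not] at hx
        by_cases hxC : x ∈ C
        · exact Or.inr hxC
        · exact Or.inl (hx ⟨hxE, hxC⟩)
      · rintro x (hx | hx)
        · exact ⟨(hX hx).1, fun h => h.2 hx⟩
        · exact ⟨hC hx, fun h => h.1.2 hx⟩
    rwa [hset] at this
  have e5 : (G \ X).ncard + X.ncard = G.ncard := Set.ncard_diff_add_ncard_of_subset hXG (toFinite _)
  rw [hNE] at e1
  rw [e2a, e2b] at e1
  rw [show mcon M C = N✶ from rfl]
  omega

lemma indep_iff_rk_eq (hI : I ⊆ M.E) : M.Indep I ↔ rk M I = I.ncard := by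
  constructor
  · exact fun h => indep_rk_eq h
  · intro h
    obtain ⟨J, hJ⟩ := M.exists_isBasis' I
    have : J = I := by
      apply Set.eq_of_subset_of_ncard_le hJ.subset _ (toFinite _)
      rw [← rk_eq_of_basis' hJ, h]
    rw [← this]; exact hJ.indep

lemma eq_of_rk_eq {M' : Matroid E} (hE : M.E = M'.E) (h : ∀ X, rk M X = rk M' X) : M = M' := by
  apply ext_indep hE
  intro I hIE
  rw [indep_iff_rk_eq hIE, indep_iff_rk_eq (hE ▸ hIE), h]

end Chunk2

section EVecLemmas

lemma eVec_mem {J : Set E} {i : E} (h : i ∈ J) : eVec J i = 1 := by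
  simp [eVec, Set.indicator_of_mem h]

lemma eVec_not_mem {J : Set E} {i : E} (h : i ∉ J) : eVec J i = 0 := by
  simp [eVec, Set.indicator_of_notMem h]

@[simp] lemma eVec_empty : eVec (∅ : Set E) = 0 := by
  funext i; simp [eVec]

lemma eVec_nonneg (J : Set E) : (0 : E → ℤ) ≤ eVec J := by
  intro i; by_cases h : i ∈ J <;> simp [eVec_mem, eVec_not_mem, h]

lemma eVec_add_compl (J : Set E) : eVec J + eVec Jᶜ = 1 := by
  funext i
  by_cases h : i ∈ J
  · simp [Pi.add_apply, eVec_mem h, eVec_not_mem (by simpa using h : i ∉ Jᶜ)]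
  · simp [Pi.add_apply, eVec_not_mem h, eVec_mem (by simpa using h : i ∈ Jᶜ)]

lemma eVec_insert {K : Set E} {i : E} (h : i ∉ K) :
    eVec (insert i K) = eVec K + eVec {i} := by
  funext j
  by_cases hj : j = i
  · subst hj
    simp [Pi.add_apply, eVec_mem (mem_insert _ _), eVec_not_mem h, eVec_mem (mem_singleton _)]
  · by_cases hjK : j ∈ K
    · simp [Pi.add_apply, eVec_mem (mem_insert_of_mem _ hjK), eVec_mem hjK,
        eVec_not_mem (by simpa using hj : j ∉ ({i} : Set E))]
    · have : j ∉ insert i K := by simp [hj, hjK]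
      simp [Pi.add_apply, eVec_not_mem this, eVec_not_mem hjK,
        eVec_not_mem (by simpa using hj : j ∉ ({i} : Set E))]

end EVecLemmas

section Flock

variable [Fintype E] {d : ℕ} {M : (E → ℤ) → Matroid E}

lemma flock_step (hM : IsMatroidFlock d M) {x : E → ℤ} {i : E} {X : Set E} (hiX : i ∉ X) :
    rk (M x) (X ∪ {i}) = rk (M x) {i} + rk (M (x + eVec {i})) X := by
  have h1 := hM.2.2.1 x i
  have hXg : X ⊆ (M x).E \ {i} := by
    rw [hM.1]; exact fun y hy => ⟨trivial, by rintro rfl; exact hiX hy⟩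
  have h2 : rk (mcon (M x) {i}) X + rk (M x) {i} = rk (M x) (X ∪ {i}) :=
    rk_mcon (by rw [hM.1]; exact subset_univ _) hXg
  have h3 : rk (mdel (M (x + eVec {i})) {i}) X = rk (M (x + eVec {i})) X :=
    rk_mdel (by rw [hM.1]; exact fun y hy => ⟨trivial, by rintro rfl; exact hiX hy⟩)
  rw [h1, h3] at h2
  omega

lemma flock_gen_fin (hM : IsMatroidFlock d M) (F : Finset E) :
    ∀ (x : E → ℤ) (X : Set E), Disjoint X (F : Set E) →
      rk (M x) (X ∪ F) = rk (M x) F + rk (M (x + eVec F)) X := by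
  classical
  induction F using Finset.induction_on with
  | empty => intro x X _; simp
  | @insert i K hiK IH =>
    intro x X hdisj
    rw [Finset.coe_insert] at hdisj ⊢
    have hiK' : i ∉ (K : Set E) := by simpa using hiK
    have hXi : Disjoint (X ∪ {i}) (K : Set E) := by
      rw [disjoint_union_left]
      refine ⟨(hdisj.mono_right (subset_insert _ _)), by simpa using hiK'⟩
    have hiX : i ∉ X := fun h => (disjoint_left.mp hdisj h) (mem_insert _ _)
    have e1 : rk (M x) (X ∪ insert i (K : Set E)) = rk (M x) K + rk (M (x + eVec K)) (X ∪ {i}) := by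
      rw [show X ∪ insert i (K : Set E) = (X ∪ {i}) ∪ K by
        rw [union_assoc, singleton_union]]
      exact IH x (X ∪ {i}) hXi
    have e2 : rk (M (x + eVec K)) (X ∪ {i}) =
        rk (M (x + eVec K)) {i} + rk (M (x + eVec K + eVec {i})) X :=
      flock_step hM hiX
    have e3 : rk (M x) (insert i (K : Set E)) = rk (M x) K + rk (M (x + eVec K)) {i} := by
      rw [show (insert i (K : Set E)) = ({i} : Set E) ∪ ↑K by rw [singleton_union]]
      exact IH x {i} (by simpa using hiK')
    rw [eVec_insert hiK', ← add_assoc]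
    omega

lemma flock_gen (hM : IsMatroidFlock d M) (K : Set E) (x : E → ℤ) (X : Set E)
    (hdisj : Disjoint X K) :
    rk (M x) (X ∪ K) = rk (M x) K + rk (M (x + eVec K)) X := by
  classical
  have h := flock_gen_fin hM K.toFinset x X (by rwa [coe_toFinset])
  rwa [coe_toFinset] at h

lemma flock_mono_step (hM : IsMatroidFlock d M) {x : E → ℤ} {i : E} {X : Set E} (hiX : i ∉ X) :
    rk (M (x + eVec {i})) X ≤ rk (M x) X := by
  have h1 := flock_step hM (x := x) hiX
  have h2 := rk_submod (M x) X {i}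
  have h3 : X ∩ {i} = ∅ := by
    ext y; simp only [mem_inter_iff, mem_singleton_iff, mem_empty_iff_false, iff_false, not_and]
    rintro hy rfl; exact hiX hy
  rw [h3, rk_empty] at h2
  omega

lemma flock_mono (hM : IsMatroidFlock d M) :
    ∀ (n : ℕ) (s : E → ℤ) (x : E → ℤ) (X : Set E), 0 ≤ s → (∀ i, s i ≠ 0 → i ∉ X) →
      (∑ i, (s i).toNat) = n → rk (M (x + s)) X ≤ rk (M x) X := by
  intro n
  induction n with
  | zero =>
    intro s x X hs _ hsum
    have : s = 0 := by
      funext i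
      show s i = 0
      have h1 : (s i).toNat = 0 := by
        by_contra h
        exact h ((Finset.sum_eq_zero_iff.mp hsum) i (Finset.mem_univ i))
      have h2 : (0 : ℤ) ≤ s i := by simpa using hs i
      omega
    rw [this, add_zero]
  | succ n IH =>
    intro s x X hs hsupp hsum
    classical
    have hs0 : ∀ j, (0:ℤ) ≤ s j := fun j => by simpa using hs j
    have hex : ∃ i, (s i).toNat ≠ 0 := by
      by_contra h
      push_neg at h
      rw [Finset.sum_eq_zero (fun i _ => h i)] at hsum
      omega
    obtain ⟨i, hi⟩ := hex
    have his : 1 ≤ s i := by omega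
    set s' : E → ℤ := s - eVec {i} with hs'
    have hs'0 : 0 ≤ s' := by
      intro j
      show (0:ℤ) ≤ s' j
      by_cases hj : j = i
      · subst hj; simp only [hs', Pi.sub_apply, eVec_mem (mem_singleton _)]; omega
      · have h2 : (0 : ℤ) ≤ s j := hs0 j
        simp only [hs', Pi.sub_apply, eVec_not_mem (by simpa using hj : j ∉ ({i} : Set E))]
        omega
    have hs'supp : ∀ j, s' j ≠ 0 → j ∉ X := by
      intro j hj
      apply hsupp j
      by_cases hji : j = i
      · subst hji; omega
      · simpa [hs', Pi.sub_apply, eVec_not_mem (by simpa using hji : j ∉ ({i} : Set E))] using hj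
    have hsum' : (∑ j, (s' j).toNat) = n := by
      have hterm : ∀ j, (s j).toNat = (s' j).toNat + (if j = i then 1 else 0) := by
        intro j
        by_cases hj : j = i
        · subst hj
          rw [if_pos rfl]
          simp only [hs', Pi.sub_apply, eVec_mem (mem_singleton _)]
          omega
        · rw [if_neg hj]
          simp only [hs', Pi.sub_apply,
            eVec_not_mem (by simpa using hj : j ∉ ({i} : Set E))]
          omega
      have hc := Finset.sum_congr rfl (fun j (_ : j ∈ Finset.univ) => hterm j)
      rw [Finset.sum_add_distrib] at hc
      have hone : (∑ j, if j = i then (1:ℕ) else 0) = 1 := by simp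
      rw [hone] at hc
      omega
    have hxs : x + s = (x + eVec {i}) + s' := by
      rw [hs']; ring
    rw [hxs]
    exact le_trans (IH s' (x + eVec {i}) X hs'0 hs'supp hsum')
      (flock_mono_step hM (hsupp i (by omega)))

end Flock

section KeyLemma

variable [Fintype E] {d : ℕ} {M : (E → ℤ) → Matroid E}

lemma rk_modular_of {M : Matroid E} {J X A : Set E} (hd : Disjoint J X)
    (h : rk M (J ∪ X) = rk M J + rk M X) (hA : A ⊆ J) :
    rk M (A ∪ X) = rk M A + rk M X := by
  have hsub := rk_submod M J (A ∪ X)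
  have h1 : J ∪ (A ∪ X) = J ∪ X := by
    rw [← union_assoc, union_eq_left.mpr hA]
  have h2 : J ∩ (A ∪ X) = A := by
    rw [inter_union_distrib_left, hd.inter_eq, union_empty, inter_eq_right.mpr hA]
  rw [h1, h2, h] at hsub
  have hle := rk_union_le M A X
  omega

lemma flock_key (hM : IsMatroidFlock d M) {α β : E → ℤ} (hab : M α = M β) (hle : α ≤ β) :
    M (α + eVec {i | α i < β i}) = M α := by
  set J : Set E := {i | α i < β i} with hJ
  set γ : E → ℤ := α + eVec J with hγ
  have hle' : ∀ i, α i ≤ β i := fun i => hle i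
  have hd : ∀ x, rk (M x) Set.univ = d := hM.2.1
  have hE : ∀ x, (M x).E = Set.univ := hM.1
  have hsupp1 : ∀ i, eVec J i ≠ 0 → i ∈ J := fun i h => by
    by_contra h'; exact h (eVec_not_mem h')
  have heqc : ∀ i, i ∉ J → α i = β i := by
    intro i h'
    have h1 : ¬ α i < β i := h'
    have h2 := hle' i
    omega
  have hsupp2 : ∀ i, (β - γ) i ≠ 0 → i ∈ J := by
    intro i h
    by_contra h'
    apply h
    have h1 : α i = β i := heqc i h'
    simp [hγ, Pi.sub_apply, Pi.add_apply, eVec_not_mem h', ← h1]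
  have h0γ : (0 : E → ℤ) ≤ β - γ := by
    intro i
    show (0:ℤ) ≤ β i - γ i
    have hγi : γ i = α i + eVec J i := rfl
    by_cases hi : i ∈ J
    · have h1 : α i < β i := hi
      rw [hγi, eVec_mem hi]; omega
    · have h1 : α i = β i := heqc i hi
      rw [hγi, eVec_not_mem hi]; omega
  -- ranks of sets disjoint from J agree at α and γ
  have f1 : ∀ X : Set E, Disjoint X J → rk (M γ) X = rk (M α) X := by
    intro X hX
    have le1 : rk (M γ) X ≤ rk (M α) X := by
      rw [hγ]
      exact flock_mono hM _ (eVec J) α X (eVec_nonneg J)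
        (fun i hi => disjoint_right.mp hX (hsupp1 i hi)) rfl
    have le2 : rk (M β) X ≤ rk (M γ) X := by
      have h2 := flock_mono hM _ (β - γ) γ X h0γ
        (fun i hi => disjoint_right.mp hX (hsupp2 i hi)) rfl
      rwa [show γ + (β - γ) = β from by ring] at h2
    have heq : rk (M β) X = rk (M α) X := by rw [← hab]
    omega
  have hcompl : Disjoint Jᶜ J := disjoint_compl_left
  have genJ : ∀ (x : E → ℤ) (X : Set E), Disjoint X J →
      rk (M x) (X ∪ J) = rk (M x) J + rk (M (x + eVec J)) X :=
    fun x X h => flock_gen hM J x X h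
  have dsum : d = rk (M α) J + rk (M α) Jᶜ := by
    have h1 := genJ α Jᶜ hcompl
    rw [compl_union_self, ← hγ, f1 Jᶜ hcompl, hd α] at h1
    exact h1
  have f3a : d = rk (M γ) J + rk (M (γ + eVec J)) Jᶜ := by
    have h1 := genJ γ Jᶜ hcompl
    rwa [compl_union_self, hd γ] at h1
  have f3b : d = rk (M α) J + rk (M (β + eVec J)) Jᶜ := by
    have h1 := genJ β Jᶜ hcompl
    rw [compl_union_self, hd β, ← hab] at h1
    exact h1
  have mono3 : rk (M (β + eVec J)) Jᶜ ≤ rk (M (γ + eVec J)) Jᶜ := by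
    have h2 := flock_mono hM _ (β - γ) (γ + eVec J) Jᶜ h0γ
      (fun i hi => by simpa using hsupp2 i hi) rfl
    rwa [show γ + eVec J + (β - γ) = β + eVec J from by ring] at h2
  have f1c : rk (M γ) Jᶜ = rk (M α) Jᶜ := f1 Jᶜ hcompl
  have lower : d ≤ rk (M γ) J + rk (M γ) Jᶜ := by
    have hsub := rk_submod (M γ) J Jᶜ
    rw [union_compl_self, disjoint_compl_right.inter_eq, rk_empty, hd γ] at hsub
    omega
  have sep : rk (M γ) J + rk (M γ) Jᶜ = d := by omega
  have f4 : ∀ A, A ⊆ J → rk (M γ) (A ∪ Jᶜ) = rk (M γ) A + rk (M γ) Jᶜ := by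
    intro A hA
    refine rk_modular_of disjoint_compl_right ?_ hA
    rw [union_compl_self, hd γ]; omega
  have f5 : ∀ A, A ⊆ J → rk (M γ) A = rk (M α) A := by
    intro A hA
    have hdisj : Disjoint A Jᶜ := disjoint_compl_right.mono_left hA
    have h1 := flock_gen hM Jᶜ γ A hdisj
    have hγc : γ + eVec Jᶜ = α + 1 := by rw [hγ, add_assoc, eVec_add_compl]
    rw [hγc, ← hM.2.2.2 α] at h1
    have h2 := f4 A hA
    omega
  have dec : ∀ (N : Matroid E), rk N Set.univ = d → rk N J + rk N Jᶜ = d →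
      ∀ X, rk N X = rk N (X ∩ J) + rk N (X \ J) := by
    intro N hN hsep X
    have s1 : rk N ((X ∩ J) ∪ Jᶜ) = rk N (X ∩ J) + rk N Jᶜ := by
      refine rk_modular_of disjoint_compl_right ?_ inter_subset_right
      rw [union_compl_self, hN]; omega
    have s2 : rk N ((X \ J) ∪ (X ∩ J)) = rk N (X \ J) + rk N (X ∩ J) := by
      refine rk_modular_of (J := Jᶜ) (disjoint_compl_left.mono_right inter_subset_right) ?_
        (fun x hx => hx.2)
      rw [union_comm, s1]; omega
    rw [diff_union_inter] at s2
    omega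
  have hXJ : ∀ X : Set E, Disjoint (X \ J) J := fun X => disjoint_left.mpr (fun _ h => h.2)
  refine eq_of_rk_eq (by rw [hE, hE]) (fun X => ?_)
  rw [dec (M γ) (hd γ) sep X, dec (M α) (hd α) (by omega) X,
    f5 _ inter_subset_right, f1 _ (hXJ X)]

end KeyLemma

section Walk

variable [Fintype E] {d : ℕ} {M : (E → ℤ) → Matroid E}

def FWalk (M : (E → ℤ) → Matroid E) (a b : E → ℤ) : Prop :=
  ∃ (k : ℕ) (γ : ℕ → E → ℤ), γ 0 = a ∧ γ k = b ∧
    (∀ t ≤ k, M (γ t) = M a) ∧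
    (∀ t, 1 ≤ t → t ≤ k → ∃ J : Set E,
      γ t - γ (t - 1) = eVec J ∨ γ t - γ (t - 1) = -eVec J)

lemma fwalk_refl (a : E → ℤ) : FWalk M a a :=
  ⟨0, fun _ => a, rfl, rfl, fun _ _ => rfl, fun t h1 h2 => absurd (h1.trans h2) (by omega)⟩

lemma fwalk_single {a b : E → ℤ} (h : M a = M b)
    (hJ : ∃ J : Set E, b - a = eVec J ∨ b - a = -eVec J) : FWalk M a b := by
  refine ⟨1, fun t => if t = 0 then a else b, by simp, by simp, ?_, ?_⟩
  · intro t ht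
    interval_cases t
    · simp
    · simpa using h.symm
  · intro t h1 h2
    have ht : t = 1 := by omega
    subst ht
    simpa using hJ

lemma fwalk_trans {a b c : E → ℤ} (h1 : FWalk M a b) (h2 : FWalk M b c) : FWalk M a c := by
  obtain ⟨k₁, γ₁, hg10, hg1k, hg1M, hg1S⟩ := h1
  obtain ⟨k₂, γ₂, hg20, hg2k, hg2M, hg2S⟩ := h2
  have hab : M a = M b := by
    have := hg1M k₁ le_rfl
    rw [hg1k] at this
    exact this.symm
  refine ⟨k₁ + k₂, fun t => if t ≤ k₁ then γ₁ t else γ₂ (t - k₁), by simp [hg10], ?_, ?_, ?_⟩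
  · by_cases hk : k₁ + k₂ ≤ k₁
    · have hk2 : k₂ = 0 := by omega
      subst hk2
      simp only [add_zero, if_pos le_rfl, hg1k]
      rw [← hg20]
      exact hg2k
    · simp only [if_neg hk, Nat.add_sub_cancel_left, hg2k]
  · intro t ht
    by_cases h : t ≤ k₁
    · simp only [if_pos h]
      exact hg1M t h
    · simp only [if_neg h]
      rw [hg2M (t - k₁) (by omega), ← hab]
  · intro t h1t h2t
    by_cases h : t ≤ k₁
    · have h' : t - 1 ≤ k₁ := by omega
      simp only [if_pos h, if_pos h']
      exact hg1S t h1t h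
    · by_cases h' : t - 1 ≤ k₁
      · -- t = k₁ + 1
        have ht : t = k₁ + 1 := by omega
        have hk2 : 1 ≤ k₂ := by omega
        simp only [if_neg h, if_pos h']
        have e1 : t - k₁ = 1 := by omega
        have e2 : γ₁ (t - 1) = γ₂ 0 := by
          have : t - 1 = k₁ := by omega
          rw [this, hg1k, ← hg20]
        rw [e1, e2]
        have := hg2S 1 le_rfl hk2
        simpa using this
      · simp only [if_neg h, if_neg h']
        have e1 : t - 1 - k₁ = t - k₁ - 1 := by omega
        rw [e1]
        exact hg2S (t - k₁) (by omega) (by omega)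

lemma eVec_univ : eVec (Set.univ : Set E) = 1 := by
  funext i; exact eVec_mem (mem_univ i)

lemma flock_shift (hM : IsMatroidFlock d M) (x : E → ℤ) : ∀ n : ℕ, M (x + n • (1 : E → ℤ)) = M x
  | 0 => by simp
  | (n+1) => by
    rw [succ_nsmul, ← add_assoc, ← hM.2.2.2 (x + n • (1 : E → ℤ)), flock_shift hM x n]

lemma fwalk_desc (hM : IsMatroidFlock d M) (b : E → ℤ) :
    ∀ n : ℕ, FWalk M (b + n • (1 : E → ℤ)) b
  | 0 => by simpa using fwalk_refl (M := M) b
  | (n+1) => by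
    refine fwalk_trans (fwalk_single ?_ ⟨Set.univ, Or.inr ?_⟩) (fwalk_desc hM b n)
    · rw [flock_shift hM b (n+1), flock_shift hM b n]
    · rw [eVec_univ, succ_nsmul]; ring
  termination_by n => n

lemma fwalk_ascend (hM : IsMatroidFlock d M) :
    ∀ (n : ℕ) (a b : E → ℤ), a ≤ b → M a = M b → (∑ i, (b i - a i).toNat) = n →
      FWalk M a b := by
  intro n
  induction n using Nat.strong_induction_on with
  | _ n IH =>
    intro a b hle hab hsum
    by_cases heq : a = b
    · subst heq; exact fwalk_refl a
    · have hle' : ∀ i, a i ≤ b i := fun i => hle i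
      have hex : ∃ i₀, a i₀ < b i₀ := by
        by_contra h
        push_neg at h
        exact heq (funext fun i => le_antisymm (hle' i) (h i))
      obtain ⟨i₀, hi₀⟩ := hex
      set J : Set E := {i | a i < b i} with hJ
      set γ' : E → ℤ := a + eVec J with hγ'
      have hkey : M γ' = M a := flock_key hM hab hle
      have hγ'le : γ' ≤ b := by
        intro i
        show γ' i ≤ b i
        have : γ' i = a i + eVec J i := rfl
        rw [this]
        by_cases hi : i ∈ J
        · have h1 : a i < b i := hi
          rw [eVec_mem hi]; omega
        · have h1 : ¬ a i < b i := hi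
          rw [eVec_not_mem hi]
          have := hle' i
          omega
      have hγ'b : M γ' = M b := hkey.trans hab
      have hterm_le : ∀ i, (b i - γ' i).toNat ≤ (b i - a i).toNat := by
        intro i
        have h1 : γ' i = a i + eVec J i := rfl
        by_cases hi : i ∈ J
        · rw [h1, eVec_mem hi]; omega
        · rw [h1, eVec_not_mem hi]; omega
      have hterm_lt : (b i₀ - γ' i₀).toNat < (b i₀ - a i₀).toNat := by
        have h1 : γ' i₀ = a i₀ + eVec J i₀ := rfl
        rw [h1, eVec_mem (by exact hi₀)]
        omega
      have hlt : (∑ i, (b i - γ' i).toNat) < n := by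
        rw [← hsum]
        exact Finset.sum_lt_sum (fun i _ => hterm_le i) ⟨i₀, Finset.mem_univ i₀, hterm_lt⟩
      have hwalk2 : FWalk M γ' b := IH _ hlt γ' b hγ'le hγ'b rfl
      have hwalk1 : FWalk M a γ' := by
        refine fwalk_single hkey.symm ⟨J, Or.inl ?_⟩
        rw [hγ']; ring
      exact fwalk_trans hwalk1 hwalk2

lemma fwalk_main (hM : IsMatroidFlock d M) (α β : E → ℤ) (hαβ : M α = M β) :
    FWalk M α β := by
  set n : ℕ := ∑ i, (α i - β i).toNat with hn
  have hle : α ≤ β + n • (1 : E → ℤ) := by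
    intro i
    show α i ≤ β i + n • (1:ℤ)
    have h1 : (α i - β i).toNat ≤ ∑ j, (α j - β j).toNat :=
      Finset.single_le_sum (f := fun j => (α j - β j).toNat)
        (fun j _ => Nat.zero_le _) (Finset.mem_univ i)
    have h2 : n • (1:ℤ) = (n:ℤ) := by simp
    rw [h2, hn]
    omega
  have hM1 : M (β + n • (1 : E → ℤ)) = M β := flock_shift hM β n
  exact fwalk_trans (fwalk_ascend hM _ α (β + n • (1:E → ℤ)) hle (hαβ.trans hM1.symm) rfl)
    (fwalk_desc hM β n)

end Walk

/-- **Lemma.** Let `M : α ↦ M_α` be a matroid flock on `E` and let `α, β ∈ ℤ^E`.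
If `M_α = M_β`, then there is a walk `γ^0, …, γ^k ∈ ℤ^E` from `α = γ^0` to `β = γ^k`
such that `M_{γ^t} = M_α` for `t = 0, …, k`, and for each `t` there is a set `J_t ⊆ E`
with `γ^t − γ^{t−1} = ± e_{J_t}`. -/
theorem flock_cell_walk [Fintype E] (d : ℕ) (M : (E → ℤ) → Matroid E)
    (hM : IsMatroidFlock d M) (α β : E → ℤ) (hαβ : M α = M β) :
    ∃ (k : ℕ) (γ : ℕ → E → ℤ), γ 0 = α ∧ γ k = β ∧
      (∀ t ≤ k, M (γ t) = M α) ∧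
      (∀ t, 1 ≤ t → t ≤ k → ∃ J : Set E,
        γ t - γ (t - 1) = eVec J ∨ γ t - γ (t - 1) = -eVec J) := by
  exact fwalk_main hM α β hαβ

end FrobFlock
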